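/- The ordinary multinomial satisfies the alternating sum formula ⟨N,k⟩_s = Σ_{i=0}^{⌊k/(s+1)⌋} (-1)^i · C(N,i) · C(k - i(s+1) + N - 1, k - i(s+1)). -/

import Mathlib

/-- The ordinary multinomial `⟨N,k⟩ₛ`: the coefficient of `T^k` in `(1+T+⋯+T^s)^N`,
with value `0` for `k < 0`. -/
noncomputable def ordMultinomial (N s : ℕ) (k : ℤ) : ℕ :=
  if 0 ≤ k then
    (((∑ i ∈ Finset.range (s + 1), (Polynomial.X : Polynomial ℕ) ^ i)) ^ N).coeff k.toNat
  else 0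

open PowerSeries Finset in
theorem stmt_2 (N s k : ℕ) (hN : 1 ≤ N) (hs : 1 ≤ s) (hk : k ≤ s * N) :
    (ordMultinomial N s k : ℤ) =
      ∑ i ∈ Finset.range (k / (s + 1) + 1),
        (-1 : ℤ) ^ i * N.choose i * (k - i * (s + 1) + N - 1).choose (k - i * (s + 1)) := by
  -- Step 1: express as a coefficient of a power series over ℤ
  have h0 : (ordMultinomial N s k : ℤ) =
      PowerSeries.coeff k ((∑ i ∈ range (s + 1), (X : ℤ⟦X⟧) ^ i) ^ N) := by
    rw [ordMultinomial, if_pos (by positivity : (0:ℤ) ≤ (k:ℤ))]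
    simp only [Int.toNat_natCast]
    have h1 : (((∑ i ∈ range (s + 1), (Polynomial.X : Polynomial ℕ) ^ i)) ^ N).coeff k
        = PowerSeries.coeff k ((∑ i ∈ range (s + 1), (X : ℕ⟦X⟧) ^ i) ^ N) := by
      rw [← Polynomial.coeff_coe]
      congr 1
      rw [← Polynomial.coeToPowerSeries.ringHom_apply, map_pow, map_sum]
      simp [Polynomial.coeToPowerSeries.ringHom_apply, Polynomial.coe_X]
    rw [h1]
    have h2 : ((∑ i ∈ range (s + 1), (X : ℤ⟦X⟧) ^ i) ^ N)
        = PowerSeries.map (Nat.castRingHom ℤ) ((∑ i ∈ range (s + 1), (X : ℕ⟦X⟧) ^ i) ^ N) := by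
      simp [map_pow, map_sum]
    rw [h2, PowerSeries.coeff_map]
    simp
  -- Step 2: the key factorization
  have hunit : (∑ i ∈ range (s + 1), (X : ℤ⟦X⟧) ^ i) ^ N
      = (1 - X ^ (s + 1)) ^ N * (invOneSubPow ℤ N).val := by
    have hmain : (∑ i ∈ range (s + 1), (X : ℤ⟦X⟧) ^ i) ^ N * (1 - X) ^ N
        = (1 - X ^ (s + 1)) ^ N := by
      rw [← mul_pow, geom_sum_mul_neg]
    rw [← hmain, mul_assoc, ← invOneSubPow_inv_eq_one_sub_pow,
      (invOneSubPow ℤ N).inv_val, mul_one]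
  -- Step 3: binomial expansion of (1 - X^(s+1))^N
  have hexp : ((1 : ℤ⟦X⟧) - X ^ (s + 1)) ^ N
      = ∑ i ∈ range (N + 1), ((-1 : ℤ) ^ i * N.choose i) • (X : ℤ⟦X⟧) ^ ((s + 1) * i) := by
    rw [sub_eq_add_neg, add_comm, add_pow]
    refine Finset.sum_congr rfl fun i _ => ?_
    rw [neg_pow, one_pow, mul_one, ← pow_mul]
    rw [zsmul_eq_mul]
    push_cast
    ring
  rw [h0, hunit, hexp, Finset.sum_mul]
  rw [map_sum]
  have hcoeff : ∀ i, PowerSeries.coeff k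
      ((((-1 : ℤ) ^ i * N.choose i) • (X : ℤ⟦X⟧) ^ ((s + 1) * i)) * (invOneSubPow ℤ N).val)
      = ((-1 : ℤ) ^ i * N.choose i) *
        (if (s + 1) * i ≤ k then ((N - 1 + (k - (s + 1) * i)).choose (N - 1) : ℤ) else 0) := by
    intro i
    rw [smul_mul_assoc, map_smul, smul_eq_mul, coeff_X_pow_mul',
      invOneSubPow_val_eq_mk_sub_one_add_choose_of_pos ℤ N hN]
    split_ifs with h
    · rw [coeff_mk]
    · rfl
  simp only [hcoeff]
  -- Step 4: compare the two sums
  have hsub : range (k / (s + 1) + 1) ⊆ range (N + 1) := by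
    apply Finset.range_subset_range.2
    have : k / (s + 1) ≤ N :=
      Nat.div_le_of_le_mul (hk.trans (Nat.mul_le_mul_right N (Nat.le_succ s)))
    omega
  rw [← Finset.sum_subset hsub]
  · refine Finset.sum_congr rfl fun i hi => ?_
    rw [Finset.mem_range] at hi
    have hle : (s + 1) * i ≤ k := by
      rw [mul_comm]
      exact (Nat.le_div_iff_mul_le (by omega)).1 (by omega)
    rw [if_pos hle]
    congr 1
    have hNm : N - 1 + (k - (s + 1) * i) = k - i * (s + 1) + N - 1 := by
      rw [mul_comm i (s+1)]; omega
    rw [hNm]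
    have hsymm := Nat.choose_symm
      (show k - i * (s + 1) ≤ k - i * (s + 1) + N - 1 by omega)
    rw [show k - i * (s + 1) + N - 1 - (k - i * (s + 1)) = N - 1 by omega] at hsymm
    rw [hsymm]
  · intro i _ hi
    rw [Finset.mem_range, not_lt] at hi
    have h2 : k < i * (s + 1) := (Nat.div_lt_iff_lt_mul (show 0 < s + 1 by omega)).1
      (show k / (s + 1) < i by omega)
    rw [mul_comm] at h2
    rw [if_neg (by omega), mul_zero]
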